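/- Let d ≥ 2, let F : ℝ^d → ℝ^d be continuously differentiable on a neighborhood of a point ω* with F(ω*) = ω*, let u ∈ ℝ^d be a unit vector, Π := I − u·uᵀ the orthogonal projection onto the orthogonal complement of u, let H : ℝ^d → ℝ^d be a symmetric linear map, γ > 0, and suppose the derivative of F at ω* equals Π∘(I − (1/γ)H). Let (ω_k) satisfy ω_{k+1} = F(ω_k) for all k, ω_k ≠ ω* for all k, and ω_k → ω*; set p_k := ω_k − ω*. Suppose (I − (1/γ)H)(p_k/‖p_k‖) converges to some w ∈ ℝ^d with w ∉ span{u}. Define m := min{‖γ·v − Π(H·v)‖ : ‖v‖ = 1, ⟨v,u⟩ = 0} and M := max{‖γ·v − Π(H·v)‖ : ‖v‖ = 1, ⟨v,u⟩ = 0}. Then ‖p_{k+1}‖/‖p_k‖ converges to a limit L satisfying m/γ ≤ L ≤ M/γ. -/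

import Mathlib

open scoped RealInnerProductSpace

/-- **Linear convergence rate.** For the fixed-point iteration `ω_{k+1} = F(ω_k) → ω*`
whose Jacobian at `ω*` is `Π∘(I − H/γ)` with `Π = I − uuᵀ`, if `(I − H/γ)` applied to the
unit error directions converges to a limit not in `span{u}`, then the ratio of consecutive
errors converges to a limit `L` with `σ_min(γI − H_V)/γ ≤ L ≤ ‖γI − H_V‖/γ`, where
`H_V` is the projected Hessian on the orthogonal complement of `u`. -/
theorem stmt_16 {d : ℕ} (hd : 2 ≤ d) (γ : ℝ) (hγ : 0 < γ)
    (F : EuclideanSpace ℝ (Fin d) → EuclideanSpace ℝ (Fin d))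
    (ωs : EuclideanSpace ℝ (Fin d))
    (hF : ∃ U ∈ nhds ωs, ContDiffOn ℝ 1 F U) (hfix : F ωs = ωs)
    (u : EuclideanSpace ℝ (Fin d)) (hu : ‖u‖ = 1)
    (H : EuclideanSpace ℝ (Fin d) →L[ℝ] EuclideanSpace ℝ (Fin d))
    (hHsym : ∀ x y, ⟪H x, y⟫ = ⟪x, H y⟫)
    (hJ : ∀ p, fderiv ℝ F ωs p =
      (p - (1 / γ) • H p) - ⟪u, p - (1 / γ) • H p⟫ • u)
    (ω : ℕ → EuclideanSpace ℝ (Fin d))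
    (hiter : ∀ k, ω (k + 1) = F (ω k)) (hne : ∀ k, ω k ≠ ωs)
    (hconv : Filter.Tendsto ω Filter.atTop (nhds ωs))
    (w : EuclideanSpace ℝ (Fin d)) (hw : w ∉ Submodule.span ℝ {u})
    (hlim : Filter.Tendsto
      (fun k => ‖ω k - ωs‖⁻¹ • (ω k - ωs) - (1 / γ) • H (‖ω k - ωs‖⁻¹ • (ω k - ωs)))
      Filter.atTop (nhds w))
    (m M : ℝ)
    (hm : m = sInf {r : ℝ | ∃ v : EuclideanSpace ℝ (Fin d), ‖v‖ = 1 ∧ ⟪v, u⟫ = 0 ∧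
      r = ‖γ • v - (H v - ⟪u, H v⟫ • u)‖})
    (hM : M = sSup {r : ℝ | ∃ v : EuclideanSpace ℝ (Fin d), ‖v‖ = 1 ∧ ⟪v, u⟫ = 0 ∧
      r = ‖γ • v - (H v - ⟪u, H v⟫ • u)‖}) :
    ∃ L : ℝ, m / γ ≤ L ∧ L ≤ M / γ ∧
      Filter.Tendsto (fun k => ‖ω (k + 1) - ωs‖ / ‖ω k - ωs‖)
        Filter.atTop (nhds L) := by
  obtain ⟨U, hU, hCD⟩ := hF
  have hdiff : DifferentiableAt ℝ F ωs := (hCD.contDiffAt hU).differentiableAt one_ne_zero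
  set Df := fderiv ℝ F ωs with hDf
  have hder : HasFDerivAt F Df ωs := hdiff.hasFDerivAt
  set p : ℕ → EuclideanSpace ℝ (Fin d) := fun k => ω k - ωs with hp
  have hpne : ∀ k, p k ≠ 0 := fun k => sub_ne_zero.mpr (hne k)
  have hpnorm : ∀ k, (0:ℝ) < ‖p k‖ := fun k => norm_pos_iff.mpr (hpne k)
  set q : ℕ → EuclideanSpace ℝ (Fin d) := fun k => ‖p k‖⁻¹ • p k with hq
  have hqnorm : ∀ k, ‖q k‖ = 1 := by
    intro k
    rw [hq, norm_smul, norm_inv, norm_norm, inv_mul_cancel₀ (hpnorm k).ne']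
  -- little-o
  have hlo : (fun x => F x - F ωs - Df (x - ωs)) =o[nhds ωs] fun x => x - ωs :=
    hder.isLittleO
  have hlo3 : (fun k => p (k+1) - Df (p k)) =o[Filter.atTop] fun k => p k := by
    have := hlo.comp_tendsto hconv
    simp only [Function.comp_def] at this
    have he : (fun k => p (k+1) - Df (p k)) = fun k => F (ω k) - F ωs - Df (ω k - ωs) := by
      funext k
      simp [hp, hiter k, hfix]
    rw [he]
    exact this
  have hr0 : Filter.Tendsto (fun k => ‖p k‖⁻¹ • (p (k+1) - Df (p k)))
      Filter.atTop (nhds 0) := by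
    have hdiv : Filter.Tendsto (fun k => ‖p (k+1) - Df (p k)‖ / ‖p k‖)
        Filter.atTop (nhds 0) := (hlo3.norm_norm).tendsto_div_nhds_zero
    apply squeeze_zero_norm _ hdiv
    intro k
    rw [norm_smul, norm_inv, norm_norm, inv_mul_eq_div]
  -- the projection map
  set g : EuclideanSpace ℝ (Fin d) → EuclideanSpace ℝ (Fin d) :=
    fun x => x - ⟪u, x⟫ • u with hg
  have hgcont : Continuous g := by
    apply continuous_id.sub
    exact (continuous_const.inner (𝕜 := ℝ) continuous_id).smul continuous_const
  have hDfq : ∀ k, Df (q k) = g (q k - (1/γ) • H (q k)) := fun k => hJ (q k)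
  have hgw : Filter.Tendsto (fun k => Df (q k)) Filter.atTop (nhds (g w)) := by
    simp only [hDfq]
    exact (hgcont.tendsto w).comp hlim
  have hkey : Filter.Tendsto (fun k => ‖p k‖⁻¹ • p (k+1)) Filter.atTop (nhds (g w)) := by
    have he : (fun k => ‖p k‖⁻¹ • p (k+1)) =
        fun k => Df (q k) + ‖p k‖⁻¹ • (p (k+1) - Df (p k)) := by
      funext k
      simp only [hq, hp]
      rw [map_smul]
      module
    rw [he]
    simpa using hgw.add hr0
  have hratio : Filter.Tendsto (fun k => ‖p (k+1)‖ / ‖p k‖) Filter.atTop (nhds ‖g w‖) := by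
    have := hkey.norm
    simpa only [norm_smul, norm_inv, norm_norm, inv_mul_eq_div] using this
  -- g w ≠ 0
  have hgw0 : g w ≠ 0 := by
    intro h
    apply hw
    rw [Submodule.mem_span_singleton]
    exact ⟨⟪u, w⟫, by rw [hg] at h; linear_combination (norm := module) -h⟩
  have hgwn : (0:ℝ) < ‖g w‖ := norm_pos_iff.mpr hgw0
  set v : EuclideanSpace ℝ (Fin d) := ‖g w‖⁻¹ • g w with hv
  have hqv : Filter.Tendsto (fun k => q (k+1)) Filter.atTop (nhds v) := by
    have he : (fun k => q (k+1)) =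
        fun k => (‖p (k+1)‖ / ‖p k‖)⁻¹ • (‖p k‖⁻¹ • p (k+1)) := by
      have hsc : ∀ k, (‖p (k+1)‖ / ‖p k‖)⁻¹ * ‖p k‖⁻¹ = ‖p (k+1)‖⁻¹ := by
        intro k
        have ha := (hpnorm k).ne'
        have hb := (hpnorm (k+1)).ne'
        field_simp
      funext k
      simp only [hq]
      rw [smul_smul, hsc k]
    rw [he]
    exact (hratio.inv₀ hgwn.ne').smul hkey
  have hvnorm : ‖v‖ = 1 := by
    have h1 : Filter.Tendsto (fun k => ‖q (k+1)‖) Filter.atTop (nhds ‖v‖) := hqv.norm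
    have h2 : Filter.Tendsto (fun k => ‖q (k+1)‖) Filter.atTop (nhds 1) := by
      simp only [hqnorm]; exact tendsto_const_nhds
    exact tendsto_nhds_unique h1 h2
  have hAv : v - (1/γ) • H v = w := by
    have h1 : Filter.Tendsto (fun k => q (k+1) - (1/γ) • H (q (k+1)))
        Filter.atTop (nhds (v - (1/γ) • H v)) :=
      hqv.sub (((H.continuous.tendsto v).comp hqv).const_smul _)
    have h2 : Filter.Tendsto (fun k => q (k+1) - (1/γ) • H (q (k+1)))
        Filter.atTop (nhds w) := by
      have := hlim.comp (Filter.tendsto_add_atTop_nat 1)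
      exact this
    exact tendsto_nhds_unique h1 h2
  have huu : ⟪u, u⟫ = 1 := by
    rw [real_inner_self_eq_norm_sq, hu]; norm_num
  have hvu : ⟪v, u⟫ = 0 := by
    rw [hv, real_inner_smul_left, hg, inner_sub_left, real_inner_smul_left, huu,
      real_inner_comm u w]
    ring
  clear_value v
  have hgw_eq : g w = γ⁻¹ • (γ • v - (H v - ⟪u, H v⟫ • u)) := by
    rw [← hAv]
    simp only [hg]
    have hvu' : ⟪u, v⟫ = 0 := by rw [real_inner_comm]; exact hvu
    rw [inner_sub_right, hvu', real_inner_smul_right]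
    match_scalars <;> field_simp <;> ring
  set S : Set ℝ := {r : ℝ | ∃ v : EuclideanSpace ℝ (Fin d), ‖v‖ = 1 ∧ ⟪v, u⟫ = 0 ∧
      r = ‖γ • v - (H v - ⟪u, H v⟫ • u)‖} with hS
  set r : ℝ := ‖γ • v - (H v - ⟪u, H v⟫ • u)‖ with hr
  have hrS : r ∈ S := ⟨v, hvnorm, hvu, rfl⟩
  have hbdd_below : BddBelow S := ⟨0, fun s hs => by
    obtain ⟨v', _, _, rfl⟩ := hs; exact norm_nonneg _⟩
  have hbdd_above : BddAbove S := by
    refine ⟨γ + 2 * ‖H‖, fun s hs => ?_⟩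
    obtain ⟨v', hv1, _, rfl⟩ := hs
    have h1 : ‖γ • v'‖ = γ := by rw [norm_smul, hv1, Real.norm_eq_abs, abs_of_pos hγ, mul_one]
    have h2 : ‖H v'‖ ≤ ‖H‖ := by
      have := H.le_opNorm v'
      rwa [hv1, mul_one] at this
    have h3 : ‖⟪u, H v'⟫ • u‖ ≤ ‖H‖ := by
      rw [norm_smul, hu, mul_one, Real.norm_eq_abs]
      exact le_trans (abs_real_inner_le_norm u (H v'))
        (by rw [hu, one_mul]; exact h2)
    calc ‖γ • v' - (H v' - ⟪u, H v'⟫ • u)‖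
        ≤ ‖γ • v'‖ + ‖H v' - ⟪u, H v'⟫ • u‖ := norm_sub_le _ _
      _ ≤ ‖γ • v'‖ + (‖H v'‖ + ‖⟪u, H v'⟫ • u‖) :=
          add_le_add le_rfl (norm_sub_le _ _)
      _ ≤ γ + (‖H‖ + ‖H‖) := by rw [h1]; exact add_le_add le_rfl (add_le_add h2 h3)
      _ = γ + 2 * ‖H‖ := by ring
  have hLr : ‖g w‖ = r / γ := by
    rw [hgw_eq, norm_smul, Real.norm_eq_abs, abs_of_pos (inv_pos.mpr hγ), ← hr,
      inv_mul_eq_div]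
  refine ⟨‖g w‖, ?_, ?_, ?_⟩
  · rw [hLr, hm]
    gcongr
    exact csInf_le hbdd_below hrS
  · rw [hLr, hM]
    gcongr
    exact le_csSup hbdd_above hrS
  · exact hratio
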